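/- Let q be a negative rational number, let M be a matroid on a finite ground set E with no loops, and let 𝛄 be a weight function such that -2 ≤ γ_e ≤ 0 for every e ∈ E. Then the multivariate matroid Tutte polynomial satisfies Z̃(M;q,𝛄) > 0. -/

import Mathlib

/-- A matroid on a finite ground set `E`, presented by its rank function. -/
structure RankMatroid (α : Type) [DecidableEq α] where
  /-- the ground set -/
  E : Finset α
  /-- the rank function -/
  r : Finset α → ℕ
  rank_le_card : ∀ A, A ⊆ E → r A ≤ A.card
  rank_mono : ∀ A B, A ⊆ B → B ⊆ E → r A ≤ r B
  rank_submodular : ∀ A B, A ⊆ E → B ⊆ E → r (A ∪ B) + r (A ∩ B) ≤ r A + r B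

/-- The multivariate matroid Tutte polynomial
`Z̃(M;q,𝛄) = Σ_{A⊆E} q^{-r(A)} ∏_{e∈A} γ_e`. -/
noncomputable def Zt {α : Type} [DecidableEq α] (M : RankMatroid α) (q : ℚ) (w : α → ℚ) : ℚ :=
  ∑ A ∈ M.E.powerset, q ^ (-(M.r A : ℤ)) * ∏ e ∈ A, w e

/-- A loop of a matroid: an element of the ground set of rank `0`. -/
def RankMatroid.IsLoop {α : Type} [DecidableEq α] (M : RankMatroid α) (e : α) : Prop :=
  e ∈ M.E ∧ M.r {e} = 0

namespace RankMatroid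

variable {α : Type} [DecidableEq α]

lemma rank_empty (M : RankMatroid α) : M.r ∅ = 0 :=
  Nat.le_zero.mp (by simpa using M.rank_le_card ∅ (Finset.empty_subset _))

/-- Deletion of an element. -/
def delete (M : RankMatroid α) (e : α) : RankMatroid α where
  E := M.E.erase e
  r := M.r
  rank_le_card A hA := M.rank_le_card A (hA.trans (Finset.erase_subset _ _))
  rank_mono A B hAB hB := M.rank_mono A B hAB (hB.trans (Finset.erase_subset _ _))
  rank_submodular A B hA hB := M.rank_submodular A B (hA.trans (Finset.erase_subset _ _))
    (hB.trans (Finset.erase_subset _ _))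

/-- Contraction of a non-loop element. -/
def contract (M : RankMatroid α) (e : α) (he : e ∈ M.E) : RankMatroid α where
  E := M.E.erase e
  r A := M.r (insert e A) - M.r {e}
  rank_le_card A hA := by
    show M.r (insert e A) - M.r {e} ≤ A.card
    have heA : e ∉ A := fun h => Finset.notMem_erase e M.E (hA h)
    have hAE : A ⊆ M.E := hA.trans (Finset.erase_subset _ _)
    have hsub := M.rank_submodular A {e} hAE (by simpa using he)
    have h1 : A ∪ {e} = insert e A := by
      ext x; simp [Finset.mem_insert, or_comm]
    have h2 : A ∩ {e} = ∅ := by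
      ext x; simp only [Finset.mem_inter, Finset.mem_singleton, Finset.notMem_empty, iff_false]
      rintro ⟨hx, rfl⟩; exact heA hx
    rw [h1, h2, M.rank_empty] at hsub
    have := M.rank_le_card A hAE
    omega
  rank_mono A B hAB hB := by
    show M.r (insert e A) - M.r {e} ≤ M.r (insert e B) - M.r {e}
    have : M.r (insert e A) ≤ M.r (insert e B) := by
      apply M.rank_mono _ _ (Finset.insert_subset_insert _ hAB)
      exact Finset.insert_subset he (hB.trans (Finset.erase_subset _ _))
    omega
  rank_submodular A B hA hB := by
    show M.r (insert e (A ∪ B)) - M.r {e} + (M.r (insert e (A ∩ B)) - M.r {e}) ≤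
      (M.r (insert e A) - M.r {e}) + (M.r (insert e B) - M.r {e})
    have hAE : insert e A ⊆ M.E := Finset.insert_subset he (hA.trans (Finset.erase_subset _ _))
    have hBE : insert e B ⊆ M.E := Finset.insert_subset he (hB.trans (Finset.erase_subset _ _))
    have hsub := M.rank_submodular (insert e A) (insert e B) hAE hBE
    have hu : insert e A ∪ insert e B = insert e (A ∪ B) := by
      ext x; simp only [Finset.mem_insert, Finset.mem_union]; tauto
    have hi : insert e A ∩ insert e B = insert e (A ∩ B) := by
      ext x; simp only [Finset.mem_insert, Finset.mem_inter]; tauto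
    rw [hu, hi] at hsub
    have h1 : M.r {e} ≤ M.r (insert e A) :=
      M.rank_mono _ _ (by simp) hAE
    have h2 : M.r {e} ≤ M.r (insert e B) :=
      M.rank_mono _ _ (by simp) hBE
    have h4 : M.r {e} ≤ M.r (insert e (A ∪ B)) :=
      M.rank_mono _ _ (by simp) (Finset.insert_subset he (Finset.union_subset
        (hA.trans (Finset.erase_subset _ _)) (hB.trans (Finset.erase_subset _ _))))
    have h3 : M.r {e} ≤ M.r (insert e (A ∩ B)) :=
      M.rank_mono _ _ (by simp) (by
        refine Finset.insert_subset he ((Finset.inter_subset_left).trans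
          (hA.trans (Finset.erase_subset _ _))))
    omega

/-- Deletion–contraction identity for the multivariate Tutte polynomial. -/
lemma Zt_delete_contract (M : RankMatroid α) (q : ℚ) (hq : q ≠ 0) (e : α) (he : e ∈ M.E)
    (hre : M.r {e} = 1) (w : α → ℚ) :
    Zt M q w = Zt (M.delete e) q w + (w e / q) * Zt (M.contract e he) q w := by
  unfold Zt
  have h1 : M.E = insert e (M.E.erase e) := (Finset.insert_erase he).symm
  rw [h1, Finset.sum_powerset_insert (Finset.notMem_erase e M.E)]
  have hdel : (M.delete e).E = M.E.erase e := rfl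
  rw [hdel]
  congr 1
  rw [Finset.mul_sum]
  apply Finset.sum_congr rfl
  intro A hA
  have hAE : A ⊆ M.E.erase e := Finset.mem_powerset.mp hA
  have heA : e ∉ A := fun h => Finset.notMem_erase e M.E (hAE h)
  have hr1 : 1 ≤ M.r (insert e A) := by
    rw [← hre]
    exact M.rank_mono _ _ (by simp) (Finset.insert_subset he (hAE.trans (Finset.erase_subset _ _)))
  have hcr : (M.contract e he).r A = M.r (insert e A) - 1 := by
    simp [contract, hre]
  rw [Finset.prod_insert heA, hcr]
  have hexp : (-(M.r (insert e A) : ℤ)) = (-1) + (-((M.r (insert e A) - 1 : ℕ) : ℤ)) := by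
    have : ((M.r (insert e A) - 1 : ℕ) : ℤ) = (M.r (insert e A) : ℤ) - 1 := by
      push_cast [Nat.cast_sub hr1]; ring
    omega
  rw [hexp, zpow_add₀ hq, zpow_neg_one]
  field_simp

lemma rank_insert_parallel (M : RankMatroid α) {e f : α} (he : e ∈ M.E) (hf : f ∈ M.E)
    (hef : e ≠ f) (hre : M.r {e} = 1) (hpar : M.r {e, f} = 1)
    {A : Finset α} (hA : A ⊆ M.E) (heA : e ∉ A) (hfA : f ∉ A) :
    M.r (insert f (insert e A)) = M.r (insert e A) := by
  have hX : insert e A ⊆ M.E := Finset.insert_subset he hA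
  have hY : ({e, f} : Finset α) ⊆ M.E := by
    intro x hx; simp only [Finset.mem_insert, Finset.mem_singleton] at hx
    rcases hx with rfl | rfl <;> assumption
  have hsub := M.rank_submodular (insert e A) {e, f} hX hY
  have hu : insert e A ∪ {e, f} = insert f (insert e A) := by
    ext x; simp [Finset.mem_insert, Finset.mem_union]; tauto
  have hi : insert e A ∩ {e, f} = {e} := by
    ext x; simp only [Finset.mem_inter, Finset.mem_insert, Finset.mem_singleton]
    constructor
    · rintro ⟨hx1, rfl | rfl⟩
      · rfl
      · rcases hx1 with rfl | hx1
        · exact absurd rfl hef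
        · exact absurd hx1 hfA
    · rintro rfl; exact ⟨Or.inl rfl, Or.inl rfl⟩
  rw [hu, hi, hre, hpar] at hsub
  have hmono : M.r (insert e A) ≤ M.r (insert f (insert e A)) :=
    M.rank_mono _ _ (Finset.subset_insert _ _)
      (Finset.insert_subset hf hX)
  omega

/-- Merging a parallel pair `e, f` (removing `f` and updating the weight of `e`)
preserves the multivariate Tutte polynomial. -/
lemma Zt_merge (M : RankMatroid α) (q : ℚ) {e f : α} (he : e ∈ M.E) (hf : f ∈ M.E)
    (hef : e ≠ f) (hre : M.r {e} = 1) (hrf : M.r {f} = 1) (hpar : M.r {e, f} = 1) (w : α → ℚ) :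
    Zt M q w = Zt (M.delete f) q (Function.update w e (w e + w f + w e * w f)) := by
  set w' := Function.update w e (w e + w f + w e * w f) with hw'
  have hfe' : f ∉ M.E.erase f := Finset.notMem_erase f M.E
  have he' : e ∈ M.E.erase f := Finset.mem_erase.mpr ⟨hef, he⟩
  have heE'' : e ∉ (M.E.erase f).erase e := Finset.notMem_erase e _
  have hE1 : M.E = insert f (M.E.erase f) := (Finset.insert_erase hf).symm
  have hE2 : M.E.erase f = insert e ((M.E.erase f).erase e) := (Finset.insert_erase he').symm
  unfold Zt
  have hdel : (M.delete f).E = M.E.erase f := rfl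
  have hdelr : ∀ A, (M.delete f).r A = M.r A := fun _ => rfl
  rw [hdel]
  conv_lhs => rw [hE1, Finset.sum_powerset_insert hfe']
  conv_lhs => rw [hE2, Finset.sum_powerset_insert heE'',
    Finset.sum_powerset_insert heE'']
  conv_rhs => rw [hE2, Finset.sum_powerset_insert heE'']
  rw [← Finset.sum_add_distrib, ← Finset.sum_add_distrib, ← Finset.sum_add_distrib,
    ← Finset.sum_add_distrib]
  apply Finset.sum_congr rfl
  intro A hA
  have hAE : A ⊆ (M.E.erase f).erase e := Finset.mem_powerset.mp hA
  have heA : e ∉ A := fun h => heE'' (hAE h)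
  have hfA : f ∉ A := fun h => hfe' ((Finset.erase_subset _ _) (hAE h))
  have hAM : A ⊆ M.E := hAE.trans ((Finset.erase_subset _ _).trans (Finset.erase_subset _ _))
  have hfeA : f ∉ insert e A := by
    simp only [Finset.mem_insert]; rintro (rfl | h); exact hef rfl; exact hfA h
  have hefA : e ∉ insert f A := by
    simp only [Finset.mem_insert]; rintro (rfl | h); exact hef rfl; exact heA h
  -- rank equalities
  have r1 : M.r (insert f (insert e A)) = M.r (insert e A) :=
    M.rank_insert_parallel he hf hef hre hpar hAM heA hfA
  have hparf : M.r {f, e} = 1 := by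
    have : ({f, e} : Finset α) = {e, f} := by ext x; simp [or_comm]
    rw [this]; exact hpar
  have r2 : M.r (insert e (insert f A)) = M.r (insert f A) :=
    M.rank_insert_parallel hf he (Ne.symm hef) hrf hparf hAM hfA heA
  have r3 : insert f (insert e A) = insert e (insert f A) := Finset.insert_comm _ _ _
  have r4 : M.r (insert f A) = M.r (insert e A) := by
    rw [← r2, ← r3, r1]
  -- weight computations
  have wprod : ∏ x ∈ A, w' x = ∏ x ∈ A, w x := by
    apply Finset.prod_congr rfl
    intro x hx
    apply Function.update_of_ne
    rintro rfl; exact heA hx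
  have hdelrA : (M.delete f).r A = M.r A := rfl
  have hdelrEA : (M.delete f).r (insert e A) = M.r (insert e A) := rfl
  rw [hdelrA, hdelrEA, Finset.prod_insert heA, Finset.prod_insert hfA,
    Finset.prod_insert heA, Finset.prod_insert hfeA, Finset.prod_insert heA, wprod]
  rw [hw', Function.update_self, r1, r4]
  ring
end RankMatroid

/-- if `q < 0`, `M` is a loopless matroid on a finite ground set, and
`-2 ≤ γ_e ≤ 0` for every `e ∈ E`, then `Z̃(M;q,𝛄) > 0`. -/
theorem matroid_tutte_pos_of_neg_q {α : Type} [DecidableEq α] (q : ℚ) (hq : q < 0)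
    (M : RankMatroid α) (hloopless : ∀ e ∈ M.E, ¬ M.IsLoop e)
    (w : α → ℚ) (hw : ∀ e ∈ M.E, -2 ≤ w e ∧ w e ≤ 0) :
    0 < Zt M q w := by
  have key : ∀ n (M : RankMatroid α) (w : α → ℚ), M.E.card = n →
      (∀ e ∈ M.E, ¬ M.IsLoop e) → (∀ e ∈ M.E, -2 ≤ w e ∧ w e ≤ 0) → 0 < Zt M q w := by
    intro n
    induction n with
    | zero =>
      intro M w hcard _ _
      have hE : M.E = ∅ := Finset.card_eq_zero.mp hcard
      simp [Zt, hE, M.rank_empty]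
    | succ n ih =>
      intro M w hcard hl hw
      obtain ⟨e, he⟩ : M.E.Nonempty := Finset.card_pos.mp (by omega)
      have hre : M.r {e} = 1 := by
        have h1 := M.rank_le_card {e} (by simpa using he)
        have h2 : M.r {e} ≠ 0 := fun h => hl e he ⟨he, h⟩
        simp at h1; omega
      have hrank1 : ∀ x ∈ M.E, M.r {x} = 1 := by
        intro x hx
        have h1 := M.rank_le_card {x} (by simpa using hx)
        have h2 : M.r {x} ≠ 0 := fun h => hl x hx ⟨hx, h⟩
        simp at h1; omega
      by_cases hpar : ∃ f ∈ M.E, f ≠ e ∧ M.r {e, f} = 1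
      · obtain ⟨f, hf, hfe, hef1⟩ := hpar
        rw [M.Zt_merge q he hf (Ne.symm hfe) hre (hrank1 f hf) hef1 w]
        apply ih
        · show (M.E.erase f).card = n
          rw [Finset.card_erase_of_mem hf, hcard]; rfl
        · intro x hx hloop
          obtain ⟨hx1, hx2⟩ := hloop
          exact hl x ((Finset.erase_subset _ _) hx1) ⟨(Finset.erase_subset _ _) hx1, hx2⟩
        · intro x hx
          have hxE : x ∈ M.E := (Finset.erase_subset _ _) hx
          by_cases hxe : x = e
          · subst hxe
            rw [Function.update_self]
            obtain ⟨h1, h2⟩ := hw x hxE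
            obtain ⟨h3, h4⟩ := hw f hf
            constructor <;> nlinarith
          · rw [Function.update_of_ne hxe]
            exact hw x hxE
      · push_neg at hpar
        rw [M.Zt_delete_contract q hq.ne e he hre w]
        have h1 : 0 < Zt (M.delete e) q w := by
          apply ih
          · show (M.E.erase e).card = n
            rw [Finset.card_erase_of_mem he, hcard]; rfl
          · intro x hx hloop
            obtain ⟨hx1, hx2⟩ := hloop
            exact hl x ((Finset.erase_subset _ _) hx1) ⟨(Finset.erase_subset _ _) hx1, hx2⟩
          · intro x hx
            exact hw x ((Finset.erase_subset _ _) hx)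
        have h2 : 0 < Zt (M.contract e he) q w := by
          apply ih
          · show (M.E.erase e).card = n
            rw [Finset.card_erase_of_mem he, hcard]; rfl
          · intro x hx hloop
            obtain ⟨hx1, hx2⟩ := hloop
            have hxE : x ∈ M.E := (Finset.erase_subset _ _) hx1
            have hxe : x ≠ e := (Finset.mem_erase.mp hx1).1
            have hc : (M.contract e he).r {x} = M.r {e, x} - M.r {e} := rfl
            have hge : M.r {e} ≤ M.r {e, x} := by
              apply M.rank_mono <;> simp [Finset.insert_subset_iff, he, hxE]
            have hne : M.r {e, x} ≠ 1 := hpar x hxE hxe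
            rw [hc, hre] at hx2
            omega
          · intro x hx
            exact hw x ((Finset.erase_subset _ _) hx)
        have h3 : 0 ≤ w e / q := by
          rcases hw e he with ⟨_, hwe⟩
          rw [div_nonneg_iff]
          right
          exact ⟨hwe, hq.le⟩
        nlinarith
  exact key M.E.card M w rfl hloopless hw
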